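/- Let f : A → B be an injective, dense and full morphism of commutative unital Banach algebras. Then the adjoint map f* : X(B) → X(A) between maximal ideal spaces (character spaces), given by f*(χ) = χ ∘ f, is a bijection. -/
import Mathlib

open WeakDual

/-- If `f : A → B` is an injective, dense and full morphism of commutative unital Banach
algebras, then the adjoint map `f* : X(B) → X(A)`, `χ ↦ χ ∘ f`, between character spaces
is a bijection. -/
theorem stmt_19 (A B : Type*) [NormedCommRing A] [NormedAlgebra ℂ A] [CompleteSpace A]
    [NormedCommRing B] [NormedAlgebra ℂ B] [CompleteSpace B]
    (f : A →ₐ[ℂ] B) (hfc : Continuous f) (hinj : Function.Injective f)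
    (hfd : DenseRange f) (hfull : ∀ a : A, IsUnit (f a) → IsUnit a) :
    Function.Bijective (fun χ : B →ₐ[ℂ] ℂ => χ.comp f) := by
  constructor
  · -- injectivity: characters are automatically continuous, agree on dense range
    intro χ₁ χ₂ h
    ext b
    have hc₁ : Continuous χ₁ := map_continuous χ₁
    have hc₂ : Continuous χ₂ := map_continuous χ₂
    have : ∀ a : A, χ₁ (f a) = χ₂ (f a) := fun a => congrArg (fun g => g a) h
    exact hfd.induction_on b (isClosed_eq hc₁ hc₂) this
  · -- surjectivity
    intro χ
    set M : Ideal A := RingHom.ker (χ : A →+* ℂ) with hM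
    -- the closure of f '' M
    set S : Set B := f '' (M : Set A) with hS
    -- closure S is closed under multiplication by B
    have hmul : ∀ (b : B), ∀ x ∈ closure S, b * x ∈ closure S := by
      intro b x hx
      have h1 : ∀ y ∈ S, b * y ∈ closure S := by
        rintro y ⟨m, hm, rfl⟩
        have : Set.MapsTo (· * f m) (Set.range f) S := by
          rintro _ ⟨a, rfl⟩
          exact ⟨a * m, M.mul_mem_left a hm, map_mul f a m⟩
        have := map_mem_closure (continuous_mul_right (f m)) (hfd b) this
        exact this
      have : Set.MapsTo (b * ·) S (closure S) := h1
      have := map_mem_closure (continuous_mul_left b) hx this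
      rwa [closure_closure] at this
    -- closure S is an ideal of B
    set T : Submodule ℂ B :=
      ((M.restrictScalars ℂ).map f.toLinearMap).topologicalClosure with hT
    have hTS : (T : Set B) = closure S := by
      simp [hT, Submodule.topologicalClosure_coe, hS, Submodule.map_coe]
    set I : Ideal B :=
      { carrier := closure S
        add_mem' := fun {x y} hx hy => by
          have : x + y ∈ (T : Set B) := by
            rw [hTS]; rw [← hTS] at hx hy; exact T.add_mem hx hy
          rwa [hTS] at this
        zero_mem' := by
          have : (0 : B) ∈ (T : Set B) := T.zero_mem
          rwa [hTS] at this
        smul_mem' := fun b x hx => hmul b x hx } with hI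
    -- I is proper: otherwise some element of S is a unit near 1
    have hIne : I ≠ ⊤ := by
      intro htop
      have h1 : (1 : B) ∈ closure S := by
        have : (1 : B) ∈ I := htop ▸ Submodule.mem_top
        exact this
      obtain ⟨y, hyS, hy⟩ := Metric.mem_closure_iff.mp h1 1 one_pos
      obtain ⟨m, hm, rfl⟩ := hyS
      have hyu : IsUnit (f m) := by
        have h' : ‖1 - f m‖ < 1 := by
          rw [dist_comm, dist_eq_norm] at hy
          rwa [norm_sub_rev] at hy
        exact sub_sub_self 1 (f m) ▸ (Units.oneSub (1 - f m) h').isUnit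
      have hmu : IsUnit m := hfull m hyu
      have hcm : IsUnit (χ m) := hmu.map χ
      have hm' : χ m = 0 := by simpa [hM, RingHom.mem_ker] using hm
      rw [hm'] at hcm
      exact hcm.ne_zero rfl
    -- extend to a maximal ideal and take its character
    obtain ⟨N, hNmax, hIN⟩ := Ideal.exists_le_maximal I hIne
    refine ⟨CharacterSpace.equivAlgHom N.toCharacterSpace, ?_⟩
    ext a
    have key : f (a - algebraMap ℂ A (χ a)) ∈ N := by
      apply hIN
      show f (a - algebraMap ℂ A (χ a)) ∈ closure S
      apply subset_closure
      refine ⟨a - algebraMap ℂ A (χ a), ?_, rfl⟩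
      show a - algebraMap ℂ A (χ a) ∈ M
      rw [hM, RingHom.mem_ker]
      simp
    have hzero : N.toCharacterSpace (f (a - algebraMap ℂ A (χ a))) = 0 :=
      N.toCharacterSpace_apply_eq_zero_of_mem key
    have h2 : N.toCharacterSpace (f a) - χ a = 0 := by
      simpa [map_sub, AlgHomClass.commutes] using hzero
    simpa using sub_eq_zero.mp h2
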